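/- arXiv:1611.04458 — 3 statements merged into one kernel-verified Lean document; each statement's English description precedes it below -/
import Mathlib

section
/- Let f : G → H be a semi-planar function between finite abelian groups of the same even order k, and suppose the incidence graph of S(G,H;f) is not connected. Then for every a ∈ G, the set P_a^1 = {b ∈ H : L(a,b) ∈ S_1} has exactly k/2 elements. -/
/-- A function `f : G → H` is *semi-planar* if for every nonzero `a : G` and every
`y : H`, the equation `f (x + a) - f x = y` has either 0 or exactly 2 solutions. -/
def IsSemiPlanar {G H : Type*} [AddGroup G] [AddGroup H] (f : G → H) : Prop :=
  ∀ a : G, a ≠ 0 → ∀ y : H,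
    Nat.card {x : G // f (x + a) - f x = y} = 0 ∨
    Nat.card {x : G // f (x + a) - f x = y} = 2

/-- The point `p = (x, y)` is incident with the line `l = L(a, b)` iff `y = f (x - a) + b`. -/
def Incid {G H : Type*} [Sub G] [Add H] (f : G → H) (p l : G × H) : Prop :=
  p.2 = f (p.1 - l.1) + l.2

/-- The adjacency relation of the incidence graph of `S(G,H;f)`: points on the left,
lines on the right, a point adjacent to a line iff incident. -/
def IncAdj {G H : Type*} [Sub G] [Add H] (f : G → H) :
    (G × H) ⊕ (G × H) → (G × H) ⊕ (G × H) → Prop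
  | Sum.inl p, Sum.inr l => Incid f p l
  | Sum.inr l, Sum.inl p => Incid f p l
  | _, _ => False

/-- The incidence graph of `S(G,H;f)`. -/
def incGraph {G H : Type*} [Sub G] [Add H] (f : G → H) :
    SimpleGraph ((G × H) ⊕ (G × H)) where
  Adj := IncAdj f
  symm := by
    constructor
    intro v w h
    cases v <;> cases w <;> exact h
  loopless := by
    constructor
    intro v h
    cases v <;> exact h

/-- The line `L(a,b)` belongs to the substructure `S₁`, i.e. lies in the same
connected component of the incidence graph as the line `L(0,0)`. -/
def InS1 {G H : Type*} [SubtractionMonoid G] [SubNegMonoid H] (f : G → H) (l : G × H) : Prop :=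
  (incGraph f).Reachable (Sum.inr l) (Sum.inr ((0 : G), (0 : H)))

lemma reach_step {G H : Type*} [AddCommGroup G] [AddCommGroup H] (f : G → H)
    (a a' : G) (b : H) (u : G) :
    (incGraph f).Reachable (Sum.inr (a, b))
      (Sum.inr (a', b + (f (u + (a' - a)) - f u))) := by
  have h1 : (incGraph f).Adj (Sum.inr (a, b)) (Sum.inl (u + a', f (u + (a' - a)) + b)) := by
    show Incid f (u + a', f (u + (a' - a)) + b) (a, b)
    unfold Incid
    simp only
    congr 2
    abel
  have h2 : (incGraph f).Adj (Sum.inl (u + a', f (u + (a' - a)) + b))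
      (Sum.inr (a', b + (f (u + (a' - a)) - f u))) := by
    show Incid f (u + a', f (u + (a' - a)) + b) (a', b + (f (u + (a' - a)) - f u))
    unfold Incid
    simp only
    rw [add_sub_cancel_right]
    abel
  exact h1.reachable.trans h2.reachable

lemma imD_card {G H : Type*} [AddCommGroup G] [AddCommGroup H] [Fintype G] [Fintype H]
    [DecidableEq H] (f : G → H) (hf : IsSemiPlanar f) (c : G) (hc : c ≠ 0) :
    (Finset.univ.image (fun x => f (x + c) - f x)).card * 2 = Fintype.card G := by
  classical
  have h := Finset.card_eq_sum_card_image (fun x => f (x + c) - f x) (Finset.univ : Finset G)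
  rw [Finset.card_univ] at h
  have h2 : ∀ b ∈ Finset.univ.image (fun x => f (x + c) - f x),
      (Finset.univ.filter (fun x => f (x + c) - f x = b)).card = 2 := by
    intro b hb
    have hcard2 : Nat.card {x : G // f (x + c) - f x = b}
        = (Finset.univ.filter (fun x => f (x + c) - f x = b)).card := by
      rw [Nat.card_eq_fintype_card, Fintype.card_subtype]
    rcases hf c hc b with h0 | hh2
    · exfalso
      rw [hcard2, Finset.card_eq_zero] at h0
      obtain ⟨x, -, hx⟩ := Finset.mem_image.mp hb
      have hmem : x ∈ Finset.univ.filter (fun x => f (x + c) - f x = b) := by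
        simp [hx]
      rw [h0] at hmem
      exact absurd hmem (Finset.notMem_empty x)
    · rw [← hcard2, hh2]
  rw [Finset.sum_congr rfl h2, Finset.sum_const, smul_eq_mul, mul_comm] at h
  omega


/-- If the incidence graph of `S(G,H;f)` is not connected, then for every `a : G` the
set `P_a^1 = {b : H | L(a,b) ∈ S₁}` has exactly `k/2` elements. -/
theorem card_Pa1 {G H : Type*} [AddCommGroup G] [AddCommGroup H]
    [Fintype G] [Fintype H]
    (hcard : Fintype.card G = Fintype.card H) (heven : Even (Fintype.card G))
    (f : G → H) (hf : IsSemiPlanar f)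
    (hnc : ¬ (incGraph f).Connected) :
    ∀ a : G, Nat.card {b : H // InS1 f (a, b)} = Fintype.card G / 2 := by
  classical
  intro a
  have hk1 : 1 ≤ Fintype.card G := Fintype.card_pos
  have hk2 : 2 ≤ Fintype.card G := by
    rcases heven with ⟨m, hm⟩; omega
  have hnt : Nontrivial G := Fintype.one_lt_card_iff_nontrivial.mp (by omega)
  obtain ⟨a0, ha0⟩ := exists_ne a
  -- a line in S1 with first coordinate a0
  have hin : ∃ b0 : H, InS1 f (a0, b0) :=
    ⟨0 + (f (0 + (a0 - 0)) - f 0), (reach_step f 0 a0 0 0).symm⟩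
  -- a line not in S1 with first coordinate a0
  have hout : ∃ b1 : H, ¬ InS1 f (a0, b1) := by
    have hv : ∃ v, ¬ (incGraph f).Reachable (Sum.inr ((0 : G), (0 : H))) v := by
      by_contra hcon
      push_neg at hcon
      exact hnc ⟨fun v w => (hcon v).symm.trans (hcon w)⟩
    obtain ⟨v, hv⟩ := hv
    have hline : ∃ l : G × H, ¬ InS1 f l := by
      cases v with
      | inr l => exact ⟨l, fun h => hv h.symm⟩
      | inl p =>
        refine ⟨(0, p.2 - f (p.1 - 0)), fun h => hv ?_⟩
        have hadj : (incGraph f).Adj (Sum.inl p) (Sum.inr ((0 : G), p.2 - f (p.1 - 0))) := by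
          show Incid f p ((0 : G), p.2 - f (p.1 - 0))
          unfold Incid
          simp only
          abel
        exact h.symm.trans hadj.reachable.symm
    obtain ⟨⟨a1, b1⟩, hl⟩ := hline
    exact ⟨b1 + (f (0 + (a0 - a1)) - f 0), fun h => hl ((reach_step f a1 a0 b1 0).trans h)⟩
  obtain ⟨b0, hb0⟩ := hin
  obtain ⟨b1, hb1⟩ := hout
  have hDcard : (Finset.univ.image (fun x => f (x + (a - a0)) - f x)).card * 2
      = Fintype.card G := imD_card f hf (a - a0) (sub_ne_zero_of_ne ha0.symm)
  set D : Finset H := Finset.univ.image (fun x => f (x + (a - a0)) - f x) with hD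
  set P : Finset H := Finset.univ.filter (fun b => InS1 f (a, b)) with hP
  set Q : Finset H := Finset.univ.filter (fun b => ¬ InS1 f (a, b)) with hQ
  have hPQ : P.card + Q.card = Fintype.card G := by
    rw [hP, hQ, Finset.card_filter_add_card_filter_not, Finset.card_univ, ← hcard]
  have hsub : ∀ b : H, (D.image (fun d => b + d)).card = D.card :=
    fun b => Finset.card_image_of_injective _ (add_right_injective b)
  have hPin : D.card ≤ P.card := by
    rw [← hsub b0]
    apply Finset.card_le_card
    intro b' hb'
    obtain ⟨d, hd, rfl⟩ := Finset.mem_image.mp hb'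
    rw [hD] at hd
    obtain ⟨x, -, rfl⟩ := Finset.mem_image.mp hd
    rw [hP]
    simp only [Finset.mem_filter, Finset.mem_univ, true_and]
    exact (reach_step f a0 a b0 x).symm.trans hb0
  have hQin : D.card ≤ Q.card := by
    rw [← hsub b1]
    apply Finset.card_le_card
    intro b' hb'
    obtain ⟨d, hd, rfl⟩ := Finset.mem_image.mp hb'
    rw [hD] at hd
    obtain ⟨x, -, rfl⟩ := Finset.mem_image.mp hd
    rw [hQ]
    simp only [Finset.mem_filter, Finset.mem_univ, true_and]
    exact fun h => hb1 ((reach_step f a0 a b1 x).trans h)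
  have hNat : Nat.card {b : H // InS1 f (a, b)} = P.card := by
    rw [Nat.card_eq_fintype_card, Fintype.card_subtype]
  rw [hNat]
  omega
end

section
/- Let f : G → H be a semi-planar function between finite abelian groups of the same even order k, and suppose the incidence graph of S(G,H;f) is not connected. Then for i = 1, 2: any two lines L(a,b₁), L(a,b₂) ∈ S_i with the same first index a and b₁ ≠ b₂ have no common point, while any two lines L(a,b), L(c,d) ∈ S_i with a ≠ c have exactly 2 common points. -/
section Aux

open Finset

variable {G H : Type*} [AddCommGroup G] [AddCommGroup H]

/-- The generating set: pairs `(e, t)` with `e ≠ 0` and `t` a "difference value" of `f`. -/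
def genSet (f : G → H) : Set (G × H) :=
  {v | v.1 ≠ 0 ∧ ∃ u, f (u + v.1) - f u = v.2}

/-- The subgroup of `G × H` generated by `genSet f`. -/
def Kgen (f : G → H) : AddSubgroup (G × H) := AddSubgroup.closure (genSet f)

lemma mem_Kgen_of_diff (f : G → H) {e : G} (he : e ≠ 0) (u : G) :
    (e, f (u + e) - f u) ∈ Kgen f :=
  AddSubgroup.subset_closure ⟨he, u, rfl⟩

lemma incid_add (f : G → H) (p l w : G × H) :
    Incid f (p + w) (l + w) ↔ Incid f p l := by
  unfold Incid
  simp only [Prod.fst_add, Prod.snd_add, add_sub_add_right_eq_sub, ← add_assoc, add_left_inj]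

/-- Translation by `w` as an automorphism of the incidence graph. -/
def trIso (f : G → H) (w : G × H) : incGraph f ≃g incGraph f where
  toEquiv := Equiv.sumCongr (Equiv.addRight w) (Equiv.addRight w)
  map_rel_iff' := by
    intro a b
    cases a with
    | inl p =>
      cases b with
      | inl q => simp [incGraph, IncAdj]
      | inr l => simpa [incGraph, IncAdj, Equiv.sumCongr] using incid_add f p l w
    | inr l =>
      cases b with
      | inl p => simpa [incGraph, IncAdj, Equiv.sumCongr] using incid_add f p l w
      | inr m => simp [incGraph, IncAdj]

lemma reach_add (f : G → H) {v : G × H} (w : G × H)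
    (h : (incGraph f).Reachable (Sum.inr v) (Sum.inr 0)) :
    (incGraph f).Reachable (Sum.inr (v + w)) (Sum.inr w) := by
  have h2 := h.map (trIso f w).toHom
  simpa [trIso] using h2

lemma gen_reach (f : G → H) {v : G × H} (hv : v ∈ genSet f) :
    (incGraph f).Reachable (Sum.inr v) (Sum.inr 0) := by
  obtain ⟨hne, u, hu⟩ := hv
  have h1 : (incGraph f).Adj (Sum.inr v) (Sum.inl (u + v.1, f (u + v.1))) := by
    show Incid f (u + v.1, f (u + v.1)) v
    show f (u + v.1) = f (u + v.1 - v.1) + v.2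
    rw [add_sub_cancel_right, ← hu]
    abel
  have h2 : (incGraph f).Adj (Sum.inl (u + v.1, f (u + v.1))) (Sum.inr (0 : G × H)) := by
    show Incid f (u + v.1, f (u + v.1)) 0
    show f (u + v.1) = f (u + v.1 - (0 : G × H).1) + (0 : G × H).2
    simp
  exact h1.reachable.trans h2.reachable

lemma mem_Kgen_reachable (f : G → H) {l : G × H} (h : l ∈ Kgen f) :
    (incGraph f).Reachable (Sum.inr l) (Sum.inr 0) := by
  induction h using AddSubgroup.closure_induction with
  | mem x hx => exact gen_reach f hx
  | zero => exact SimpleGraph.Reachable.refl _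
  | add x y hx hy ihx ihy =>
    exact (by simpa using reach_add f y ihx : (incGraph f).Reachable (Sum.inr (x + y)) (Sum.inr y)).trans ihy
  | neg x hx ihx =>
    have := reach_add f (-x) ihx
    rw [add_neg_cancel] at this
    exact this.symm

/-- The line associated to a vertex: a line maps to itself, a point to some line through it. -/
def lineOf (f : G → H) : (G × H) ⊕ (G × H) → G × H
  | Sum.inl p => (p.1, p.2 - f 0)
  | Sum.inr l => l

lemma incid_sub_mem (f : G → H) {p l : G × H} (hpl : Incid f p l) :
    (p.1, p.2 - f 0) - l ∈ Kgen f := by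
  by_cases hc : p.1 = l.1
  · have h2 : p.2 - f 0 - l.2 = 0 := by
      rw [hpl, hc, sub_self]; abel
    have : ((p.1, p.2 - f 0) : G × H) - l = 0 := by
      rw [Prod.ext_iff]
      exact ⟨by simpa using sub_eq_zero.mpr hc, by simpa using h2⟩
    rw [this]; exact zero_mem _
  · apply AddSubgroup.subset_closure
    refine ⟨by simpa using sub_ne_zero.mpr hc, 0, ?_⟩
    show f (0 + (p.1 - l.1)) - f 0 = p.2 - f 0 - l.2
    rw [zero_add, hpl]
    abel

lemma adj_sub_mem (f : G → H) {v w : (G × H) ⊕ (G × H)}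
    (h : (incGraph f).Adj v w) : lineOf f v - lineOf f w ∈ Kgen f := by
  cases v with
  | inl p =>
    cases w with
    | inl q => exact absurd h (by simp [incGraph, IncAdj])
    | inr l => exact incid_sub_mem f h
  | inr l =>
    cases w with
    | inl p =>
      have := neg_mem (incid_sub_mem f (h : Incid f p l))
      rwa [neg_sub] at this
    | inr m => exact absurd h (by simp [incGraph, IncAdj])

lemma reach_sub_mem (f : G → H) {v w : (G × H) ⊕ (G × H)}
    (h : (incGraph f).Reachable v w) : lineOf f v - lineOf f w ∈ Kgen f := by
  obtain ⟨p⟩ := h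
  induction p with
  | nil => simpa using zero_mem (Kgen f)
  | cons h q ih =>
    have h1 := adj_sub_mem f h
    have h2 := add_mem h1 ih
    rwa [sub_add_sub_cancel] at h2

lemma inS1_iff (f : G → H) (l : G × H) : InS1 f l ↔ l ∈ Kgen f := by
  constructor
  · intro h
    have := reach_sub_mem f h
    simpa [lineOf, Prod.mk_zero_zero] using this
  · intro h
    exact mem_Kgen_reachable f h

lemma Kgen_ne_top (f : G → H) (hnc : ¬ (incGraph f).Connected) : Kgen f ≠ ⊤ := by
  intro htop
  apply hnc
  rw [SimpleGraph.connected_iff]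
  refine ⟨?_, ⟨Sum.inr 0⟩⟩
  have key : ∀ v, (incGraph f).Reachable v (Sum.inr 0) := by
    intro v
    cases v with
    | inl p =>
      have hadj : (incGraph f).Adj (Sum.inl p) (Sum.inr (p.1, p.2 - f 0)) := by
        show Incid f p (p.1, p.2 - f 0)
        show p.2 = f (p.1 - p.1) + (p.2 - f 0)
        rw [sub_self]
        abel
      exact hadj.reachable.trans (mem_Kgen_reachable f (htop ▸ AddSubgroup.mem_top _))
    | inr l => exact mem_Kgen_reachable f (htop ▸ AddSubgroup.mem_top _)
  intro u v
  exact (key u).trans (key v).symm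

variable [Fintype G] [Fintype H]

open scoped Classical in
lemma two_mul_T (f : G → H) (hf : IsSemiPlanar f) {g : G} (hg : g ≠ 0) :
    2 * (univ.filter (fun y : H => ∃ x, f (x + g) - f x = y)).card = Fintype.card G := by
  classical
  have hsum : ∑ y : H, (univ.filter (fun x : G => f (x + g) - f x = y)).card = Fintype.card G := by
    rw [← Finset.card_univ]
    exact (Finset.card_eq_sum_card_fiberwise (fun x _ => Finset.mem_univ _)).symm
  have hc : ∀ y : H, (univ.filter (fun x : G => f (x + g) - f x = y)).card = 0 ∨
      (univ.filter (fun x : G => f (x + g) - f x = y)).card = 2 := by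
    intro y
    have := hf g hg y
    rwa [Nat.card_eq_fintype_card, Fintype.card_subtype] at this
  set T := univ.filter (fun y : H => ∃ x, f (x + g) - f x = y) with hT
  have h1 : ∀ y ∈ T, (univ.filter (fun x : G => f (x + g) - f x = y)).card = 2 := by
    intro y hy
    rcases hc y with h0 | h2
    · exfalso
      rw [Finset.card_eq_zero, Finset.filter_eq_empty_iff] at h0
      obtain ⟨x, hx⟩ := (Finset.mem_filter.mp hy).2
      exact h0 (mem_univ x) hx
    · exact h2
  have h2 : ∀ y ∈ (univ : Finset H), y ∉ T →
      (univ.filter (fun x : G => f (x + g) - f x = y)).card = 0 := by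
    intro y _ hy
    rcases hc y with h0 | h2
    · exact h0
    · exfalso
      apply hy
      rw [hT, mem_filter]
      refine ⟨mem_univ _, ?_⟩
      have hne : (univ.filter (fun x : G => f (x + g) - f x = y)).Nonempty := by
        rw [← Finset.card_pos, h2]; norm_num
      obtain ⟨x, hx⟩ := hne
      exact ⟨x, (mem_filter.mp hx).2⟩
  calc 2 * T.card = ∑ _y ∈ T, 2 := by rw [Finset.sum_const, smul_eq_mul, mul_comm]
    _ = ∑ y ∈ T, (univ.filter (fun x : G => f (x + g) - f x = y)).card :=
        (Finset.sum_congr rfl h1).symm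
    _ = ∑ y : H, (univ.filter (fun x : G => f (x + g) - f x = y)).card :=
        Finset.sum_subset (Finset.subset_univ T) h2
    _ = Fintype.card G := hsum

open scoped Classical in
lemma fiber_bound (f : G → H) (hf : IsSemiPlanar f) {e : G} (he : e ≠ 0) (g : G) :
    Fintype.card G ≤
      2 * (univ.filter (fun v : G × H => v ∈ Kgen f ∧ v.1 = g)).card := by
  classical
  by_cases hg : g = 0
  · -- use the injection y ↦ (0, y - t₀) from T_e
    subst hg
    have hle := Finset.card_le_card_of_injOn (fun y : H => ((0 : G), y - (f (0 + e) - f 0)))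
      (s := univ.filter (fun y : H => ∃ x, f (x + e) - f x = y))
      (t := univ.filter (fun v : G × H => v ∈ Kgen f ∧ v.1 = 0))
      (by
        intro y hy
        simp only [Finset.mem_coe] at hy ⊢
        rw [mem_filter] at hy ⊢
        obtain ⟨-, x, hx⟩ := hy
        refine ⟨mem_univ _, ?_, rfl⟩
        have h1 : ((e, y) : G × H) ∈ Kgen f := hx ▸ mem_Kgen_of_diff f he x
        have h2 : ((e, f (0 + e) - f 0) : G × H) ∈ Kgen f := mem_Kgen_of_diff f he 0
        have := sub_mem h1 h2
        simpa using this)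
      (by
        intro y _ y' _ hyy'
        simpa using hyy')
    have := two_mul_T f hf he
    omega
  · have hle := Finset.card_le_card_of_injOn (fun y : H => ((g : G), y))
      (s := univ.filter (fun y : H => ∃ x, f (x + g) - f x = y))
      (t := univ.filter (fun v : G × H => v ∈ Kgen f ∧ v.1 = g))
      (by
        intro y hy
        simp only [Finset.mem_coe] at hy ⊢
        rw [mem_filter] at hy ⊢
        obtain ⟨-, x, hx⟩ := hy
        exact ⟨mem_univ _, hx ▸ mem_Kgen_of_diff f hg x, rfl⟩)
      (by
        intro y _ y' _ hyy'
        simpa using hyy')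
    have := two_mul_T f hf hg
    omega

open scoped Classical in
lemma Kcard_eq (f : G → H) :
    Nat.card (Kgen f) = (univ.filter (fun v : G × H => v ∈ Kgen f)).card := by
  classical
  rw [Nat.card_eq_fintype_card]
  convert Fintype.card_subtype (fun v : G × H => v ∈ Kgen f)

open scoped Classical in
lemma KS_fiberwise (f : G → H) :
    (univ.filter (fun v : G × H => v ∈ Kgen f)).card =
      ∑ g : G, (univ.filter (fun v : G × H => v ∈ Kgen f ∧ v.1 = g)).card := by
  classical
  rw [Finset.card_eq_sum_card_fiberwise (f := fun v : G × H => v.1)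
    (t := (univ : Finset G)) (fun v _ => mem_univ _)]
  refine Finset.sum_congr rfl fun g _ => ?_
  congr 1
  rw [Finset.filter_filter]

lemma KS_lower (f : G → H) (hf : IsSemiPlanar f) {e : G} (he : e ≠ 0) :
    Fintype.card G * Fintype.card G ≤ 2 * Nat.card (Kgen f) := by
  classical
  rw [Kcard_eq, KS_fiberwise, Finset.mul_sum]
  calc Fintype.card G * Fintype.card G
      = ∑ _g : G, Fintype.card G := by rw [Finset.sum_const, card_univ, smul_eq_mul, mul_comm]
    _ ≤ ∑ g : G, 2 * (univ.filter (fun v : G × H => v ∈ Kgen f ∧ v.1 = g)).card :=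
        Finset.sum_le_sum fun g _ => fiber_bound f hf he g

lemma KS_upper (f : G → H) (hne : Kgen f ≠ ⊤) (hcard : Fintype.card G = Fintype.card H) :
    2 * Nat.card (Kgen f) ≤ Fintype.card G * Fintype.card G := by
  have hdvd : Nat.card (Kgen f) ∣ Nat.card (G × H) :=
    AddSubgroup.card_addSubgroup_dvd_card (Kgen f)
  have hne' : Nat.card (Kgen f) ≠ Nat.card (G × H) := by
    intro h
    exact hne (AddSubgroup.eq_top_of_card_eq _ h)
  have hGH : Nat.card (G × H) = Fintype.card G * Fintype.card G := by
    rw [Nat.card_eq_fintype_card, Fintype.card_prod, hcard]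
  obtain ⟨c, hc⟩ := hdvd
  have hpos : 0 < Nat.card (G × H) := Nat.card_pos
  rcases Nat.lt_or_ge c 2 with hc2 | hc2
  · interval_cases c
    · omega
    · omega
  · calc 2 * Nat.card (Kgen f) ≤ c * Nat.card (Kgen f) :=
        Nat.mul_le_mul_right _ hc2
      _ = Nat.card (G × H) := by rw [mul_comm, ← hc]
      _ = _ := hGH

open scoped Classical in
lemma key_exists (f : G → H) (hf : IsSemiPlanar f) (hne : Kgen f ≠ ⊤)
    (hcard : Fintype.card G = Fintype.card H)
    {e : G} (he : e ≠ 0) {s : H} (hs : ((e, s) : G × H) ∈ Kgen f) :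
    ∃ u, f (u + e) - f u = s := by
  classical
  by_contra hcon
  push_neg at hcon
  -- fiber at e has card ≥ T_e.card + 1
  have hsT : s ∉ univ.filter (fun y : H => ∃ x, f (x + e) - f x = y) := by
    simp only [mem_filter, mem_univ, true_and]
    rintro ⟨x, hx⟩
    exact hcon x hx
  have hle := Finset.card_le_card_of_injOn (fun y : H => ((e : G), y))
    (s := insert s (univ.filter (fun y : H => ∃ x, f (x + e) - f x = y)))
    (t := univ.filter (fun v : G × H => v ∈ Kgen f ∧ v.1 = e))
    (by
      intro y hy
      simp only [Finset.mem_coe] at hy ⊢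
      rw [Finset.mem_insert] at hy
      rw [mem_filter]
      rcases hy with rfl | hy
      · exact ⟨mem_univ _, hs, rfl⟩
      · rw [mem_filter] at hy
        obtain ⟨-, x, hx⟩ := hy
        exact ⟨mem_univ _, hx ▸ mem_Kgen_of_diff f he x, rfl⟩)
    (by
      intro y _ y' _ hyy'
      simpa using hyy')
  rw [Finset.card_insert_of_notMem hsT] at hle
  have hT := two_mul_T f hf he
  -- lower bound with the improved fiber at e
  have hlow : Fintype.card G * Fintype.card G + 2 ≤ 2 * Nat.card (Kgen f) := by
    rw [Kcard_eq, KS_fiberwise, Finset.mul_sum]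
    have hsplit := Finset.sum_eq_sum_sdiff_singleton_add (Finset.mem_univ e)
      (fun g => 2 * (univ.filter (fun v : G × H => v ∈ Kgen f ∧ v.1 = g)).card)
    rw [hsplit]
    have h1 : ∀ g ∈ univ \ {e}, Fintype.card G ≤
        2 * (univ.filter (fun v : G × H => v ∈ Kgen f ∧ v.1 = g)).card :=
      fun g _ => fiber_bound f hf he g
    have h2 : Fintype.card G + 2 ≤
        2 * (univ.filter (fun v : G × H => v ∈ Kgen f ∧ v.1 = e)).card := by omega
    have h3 : (univ \ {e} : Finset G).card * Fintype.card G ≤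
        ∑ g ∈ univ \ {e}, 2 * (univ.filter (fun v : G × H => v ∈ Kgen f ∧ v.1 = g)).card := by
      calc (univ \ {e} : Finset G).card * Fintype.card G
          = ∑ _g ∈ univ \ {e}, Fintype.card G := by rw [Finset.sum_const, smul_eq_mul]
        _ ≤ _ := Finset.sum_le_sum h1
    have hcardsd : (univ \ {e} : Finset G).card + 1 = Fintype.card G := by
      rw [Finset.card_sdiff_of_subset (Finset.singleton_subset_iff.mpr (mem_univ e))]
      have hpos : 0 < Fintype.card G := Fintype.card_pos
      simp only [Finset.card_singleton, Finset.card_univ]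
      omega
    have hgoal : Fintype.card G * Fintype.card G + 2 =
        (univ \ {e} : Finset G).card * Fintype.card G + (Fintype.card G + 2) := by
      rw [← hcardsd]; ring
    rw [hgoal]
    exact Nat.add_le_add h3 h2
  have hup := KS_upper f hne hcard
  omega

lemma coset_arg (f : G → H) (hf : IsSemiPlanar f) {e : G} (he : e ≠ 0)
    (hcard : Fintype.card G = Fintype.card H)
    {l m : G × H} (hl : l ∉ Kgen f) (hm : m ∉ Kgen f) : l - m ∈ Kgen f := by
  classical
  by_contra hlm
  set KS := univ.filter (fun v : G × H => v ∈ Kgen f) with hKS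
  have hA : (KS.image (fun v => l + v)).card = KS.card :=
    Finset.card_image_of_injective _ (add_right_injective l)
  have hB : (KS.image (fun v => m + v)).card = KS.card :=
    Finset.card_image_of_injective _ (add_right_injective m)
  have hd1 : Disjoint KS (KS.image (fun v => l + v)) := by
    rw [Finset.disjoint_left]
    intro x hx hx2
    rw [Finset.mem_image] at hx2
    obtain ⟨v, hv, rfl⟩ := hx2
    rw [hKS, mem_filter] at hx hv
    exact hl (by simpa using sub_mem hx.2 hv.2)
  have hd2 : Disjoint KS (KS.image (fun v => m + v)) := by
    rw [Finset.disjoint_left]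
    intro x hx hx2
    rw [Finset.mem_image] at hx2
    obtain ⟨v, hv, rfl⟩ := hx2
    rw [hKS, mem_filter] at hx hv
    exact hm (by simpa using sub_mem hx.2 hv.2)
  have hd3 : Disjoint (KS.image (fun v => l + v)) (KS.image (fun v => m + v)) := by
    rw [Finset.disjoint_left]
    intro x hx hx2
    rw [Finset.mem_image] at hx hx2
    obtain ⟨v, hv, rfl⟩ := hx
    obtain ⟨w, hw, hww⟩ := hx2
    rw [hKS, mem_filter] at hv hw
    apply hlm
    have : l - m = w - v := by
      have := hww.symm
      rw [← sub_eq_iff_eq_add'] at this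
      rw [← this]
      abel
    rw [this]
    exact sub_mem hw.2 hv.2
  have hd : Disjoint KS ((KS.image (fun v => l + v)) ∪ (KS.image (fun v => m + v))) :=
    Finset.disjoint_union_right.mpr ⟨hd1, hd2⟩
  have hcu : (KS ∪ ((KS.image (fun v => l + v)) ∪ (KS.image (fun v => m + v)))).card
      = KS.card + ((KS.image (fun v => l + v)) ∪ (KS.image (fun v => m + v))).card :=
    Finset.card_union_of_disjoint hd
  have hcu2 : ((KS.image (fun v => l + v)) ∪ (KS.image (fun v => m + v))).card
      = (KS.image (fun v => l + v)).card + (KS.image (fun v => m + v)).card :=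
    Finset.card_union_of_disjoint hd3
  have hle : (KS ∪ ((KS.image (fun v => l + v)) ∪ (KS.image (fun v => m + v)))).card
      ≤ Fintype.card G * Fintype.card G := by
    calc _ ≤ (univ : Finset (G × H)).card := Finset.card_le_univ _
      _ = Fintype.card G * Fintype.card G := by
          rw [Finset.card_univ, Fintype.card_prod, hcard]
  have hlow := KS_lower f hf he
  rw [Kcard_eq] at hlow
  rw [← hKS] at hlow
  have h0 : (0 : G × H) ∈ KS := by
    rw [hKS, mem_filter]
    exact ⟨mem_univ _, zero_mem _⟩
  have hpos : 0 < KS.card := Finset.card_pos.mpr ⟨0, h0⟩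
  omega

end Aux

/-- If the incidence graph of `S(G,H;f)` is not connected, then for two lines in the
same substructure `Sᵢ`: lines `L(a,b₁)`, `L(a,b₂)` with `b₁ ≠ b₂` have no common point,
while lines `L(a,b)`, `L(c,d)` with `a ≠ c` have exactly 2 common points. -/
theorem divisible_substructures {G H : Type*} [AddCommGroup G] [AddCommGroup H]
    [Fintype G] [Fintype H]
    (hcard : Fintype.card G = Fintype.card H) (heven : Even (Fintype.card G))
    (f : G → H) (hf : IsSemiPlanar f)
    (hnc : ¬ (incGraph f).Connected) :
    ∀ l m : G × H, (InS1 f l ↔ InS1 f m) →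
      (l.1 = m.1 → l.2 ≠ m.2 → ¬ ∃ p : G × H, Incid f p l ∧ Incid f p m) ∧
      (l.1 ≠ m.1 → Nat.card {p : G × H // Incid f p l ∧ Incid f p m} = 2) := by
  intro l m hiff
  constructor
  · rintro h1 h2 ⟨p, hpl, hpm⟩
    apply h2
    have h3 : f (p.1 - l.1) + l.2 = f (p.1 - m.1) + m.2 := hpl.symm.trans hpm
    rw [h1] at h3
    exact add_left_cancel h3
  · intro hne1
    have he : l.1 - m.1 ≠ 0 := sub_ne_zero.mpr hne1
    have hKne := Kgen_ne_top f hnc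
    have hmem : l - m ∈ Kgen f := by
      rcases Classical.em (l ∈ Kgen f) with hl | hl
      · have hm : m ∈ Kgen f := (inS1_iff f m).mp (hiff.mp ((inS1_iff f l).mpr hl))
        exact sub_mem hl hm
      · have hm : m ∉ Kgen f := fun hm => hl ((inS1_iff f l).mp (hiff.mpr ((inS1_iff f m).mpr hm)))
        exact coset_arg f hf he hcard hl hm
    have hmem' : ((l.1 - m.1, l.2 - m.2) : G × H) ∈ Kgen f := hmem
    obtain ⟨u, hu⟩ := key_exists f hf hKne hcard he hmem'
    have hequiv : {p : G × H // Incid f p l ∧ Incid f p m} ≃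
        {x : G // f (x + (l.1 - m.1)) - f x = l.2 - m.2} := by
      refine ⟨fun p => ⟨p.1.1 - l.1, ?_⟩, fun x => ⟨(x.1 + l.1, f x.1 + l.2), ?_, ?_⟩, ?_, ?_⟩
      · obtain ⟨⟨x, y⟩, hpl, hpm⟩ := p
        simp only [Incid] at hpl hpm
        rw [sub_add_sub_cancel]
        have h1 : f (x - l.1) = y - l.2 := by rw [hpl]; abel
        have h2 : f (x - m.1) = y - m.2 := by rw [hpm]; abel
        rw [h1, h2]
        abel
      · show f x.1 + l.2 = f (x.1 + l.1 - l.1) + l.2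
        rw [add_sub_cancel_right]
      · show f x.1 + l.2 = f (x.1 + l.1 - m.1) + m.2
        have h3 : x.1 + l.1 - m.1 = x.1 + (l.1 - m.1) := by abel
        rw [h3, sub_eq_iff_eq_add.mp x.2]
        abel
      · rintro ⟨⟨x, y⟩, hpl, hpm⟩
        ext
        · show x - l.1 + l.1 = x
          abel
        · show f (x - l.1) + l.2 = y
          exact hpl.symm
      · rintro ⟨x, hx⟩
        ext
        show x + l.1 - l.1 = x
        abel
    rw [Nat.card_congr hequiv]
    rcases hf (l.1 - m.1) he (l.2 - m.2) with h0 | h2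
    · exfalso
      rw [Nat.card_eq_zero] at h0
      rcases h0 with h0 | h0
      · exact h0.false ⟨u, hu⟩
      · exact (not_finite {x : G // f (x + (l.1 - m.1)) - f x = l.2 - m.2} : _)
    · exact h2
end

section
/- Let f : G → H be a semi-planar function between finite abelian groups of the same even order k > 2, and suppose the incidence graph of S(G,H;f) is not connected. If a, c ∈ G satisfy P_a^i ∩ P_c^i ≠ ∅ for i = 1 or i = 2, then P_{a−c}^1 = P_{c−a}^1 = P_0^1. -/
section Aux
variable {G H : Type*} [AddCommGroup G] [AddCommGroup H]

def shiftMap (t : G) (s : H) : (G × H) ⊕ (G × H) → (G × H) ⊕ (G × H) :=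
  Sum.map (fun p => (p.1 + t, p.2 + s)) (fun l => (l.1 + t, l.2 + s))

lemma reach_shift (f : G → H) (t : G) (s : H)
    {u v : (G × H) ⊕ (G × H)} (h : (incGraph f).Reachable u v) :
    (incGraph f).Reachable (shiftMap t s u) (shiftMap t s v) := by
  have hadj : ∀ {x y : (G × H) ⊕ (G × H)}, (incGraph f).Adj x y →
      (incGraph f).Adj (shiftMap t s x) (shiftMap t s y) := by
    intro x y hxy
    have key : ∀ (p l : G × H), Incid f p l →
        Incid f (p.1 + t, p.2 + s) (l.1 + t, l.2 + s) := by
      intro p l hpl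
      simp only [Incid] at hpl ⊢
      rw [add_sub_add_right_eq_sub, hpl, add_assoc]
    cases x with
    | inl p =>
      cases y with
      | inl q => exact hxy.elim
      | inr l => exact key p l hxy
    | inr l =>
      cases y with
      | inl p => exact key p l hxy
      | inr m => exact hxy.elim
  exact h.map ⟨shiftMap t s, hadj⟩

lemma InS1_sub (f : G → H) {a c : G} {b d : H}
    (h1 : InS1 f (a, b)) (h2 : InS1 f (c, d)) : InS1 f (a - c, b - d) := by
  have h3 : (incGraph f).Reachable (Sum.inr (a, b)) (Sum.inr (c, d)) := h1.trans h2.symm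
  have h4 := reach_shift f (-c) (-d) h3
  simpa [shiftMap, InS1, sub_eq_add_neg] using h4

lemma InS1_add (f : G → H) {a c : G} {b d : H}
    (h1 : InS1 f (a, b)) (h2 : InS1 f (c, d)) : InS1 f (a + c, b + d) := by
  have h4 := reach_shift f c d h1
  simp only [shiftMap, Sum.map_inr, zero_add] at h4
  exact h4.trans h2

lemma InS1_zero (f : G → H) : InS1 f ((0 : G), (0 : H)) := SimpleGraph.Reachable.refl _

lemma InS1_basic (f : G → H) (a : G) (x : G) : InS1 f (a, f (x + a) - f x) := by
  have adj1 : (incGraph f).Adj (Sum.inr (a, f (x + a) - f x)) (Sum.inl (x + a, f (x + a))) := by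
    show Incid f _ _
    simp only [Incid]
    rw [add_sub_cancel_right]
    abel
  have adj2 : (incGraph f).Adj (Sum.inl (x + a, f (x + a))) (Sum.inr ((0 : G), (0 : H))) := by
    show Incid f _ _
    simp [Incid]
  exact adj1.reachable.trans adj2.reachable

open Finset in
lemma card_eq_two_mul (f : G → H) [Fintype G] [DecidableEq H] (hf : IsSemiPlanar f)
    {d : G} (hd : d ≠ 0) :
    Fintype.card G = 2 * (Finset.image (fun x => f (x + d) - f x) Finset.univ).card := by
  classical
  set D := Finset.image (fun x => f (x + d) - f x) Finset.univ with hD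
  have h1 : (Finset.univ : Finset G).card =
      ∑ y ∈ D, (Finset.univ.filter (fun x => f (x + d) - f x = y)).card :=
    Finset.card_eq_sum_card_fiberwise (fun x _ => Finset.mem_image_of_mem _ (Finset.mem_univ x))
  have h2 : ∀ y ∈ D, (Finset.univ.filter (fun x => f (x + d) - f x = y)).card = 2 := by
    intro y hy
    have h := hf d hd y
    rw [Nat.card_eq_fintype_card, Fintype.card_subtype] at h
    rcases h with h | h
    · exfalso
      rw [Finset.card_eq_zero] at h
      obtain ⟨x, -, hx⟩ := Finset.mem_image.mp hy
      have : x ∈ Finset.univ.filter (fun x => f (x + d) - f x = y) := by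
        simp [hx]
      simp [h] at this
    · exact h
  rw [Fintype.card, h1, Finset.sum_congr rfl h2, Finset.sum_const, smul_eq_mul, mul_comm]

/-- The key "index two" lemma: if `u` and `v` are both outside `P_0^1`, then `u - v ∈ P_0^1`. -/
lemma index_two (f : G → H) [Fintype G] [Fintype H]
    (hcard : Fintype.card G = Fintype.card H) (hf : IsSemiPlanar f)
    (hk : 2 < Fintype.card G) {u v : H}
    (hu : ¬ InS1 f ((0 : G), u)) (hv : ¬ InS1 f ((0 : G), v)) :
    InS1 f ((0 : G), u - v) := by
  classical
  by_contra huv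
  -- the "subgroup" N = P_0^1 as a finset
  set NF : Finset H := Finset.univ.filter (fun b => InS1 f ((0 : G), b)) with hNF
  have memNF : ∀ b : H, b ∈ NF ↔ InS1 f ((0 : G), b) := by
    intro b; simp [hNF]
  have sub_closed : ∀ b b' : H, b ∈ NF → b' ∈ NF → b - b' ∈ NF := by
    intro b b' hb hb'
    rw [memNF] at hb hb' ⊢
    have := InS1_sub f hb hb'
    simpa using this
  have zero_mem : (0 : H) ∈ NF := (memNF 0).mpr (InS1_zero f)
  -- a nonzero element of G
  have : Nontrivial G := Fintype.one_lt_card_iff_nontrivial.mp (by omega)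
  obtain ⟨d, hd⟩ := exists_ne (0 : G)
  set D : Finset H := Finset.image (fun x => f (x + d) - f x) Finset.univ with hDdef
  have hcardD : Fintype.card G = 2 * D.card := card_eq_two_mul f hf hd
  -- D sits inside a coset of N, so |D| ≤ |NF|
  have hDmem : ∀ y ∈ D, InS1 f (d, y) := by
    intro y hy
    obtain ⟨x, -, hx⟩ := Finset.mem_image.mp hy
    rw [← hx]; exact InS1_basic f d x
  set y₀ : H := f (0 + d) - f 0 with hy₀
  have hy₀D : y₀ ∈ D := Finset.mem_image_of_mem _ (Finset.mem_univ 0)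
  have hDle : D.card ≤ NF.card := by
    apply Finset.card_le_card_of_injOn (fun y => y - y₀)
    · intro y hy
      rw [Finset.mem_coe, memNF]
      have := InS1_sub f (hDmem y hy) (hDmem y₀ hy₀D)
      simpa using this
    · intro y _ y' _ h
      exact sub_left_injective h
  -- the three pairwise-disjoint translates
  set B : Finset H := NF.image (fun n => u + n) with hB
  set C : Finset H := NF.image (fun n => v + n) with hC
  have cardB : B.card = NF.card := Finset.card_image_of_injective _ (add_right_injective u)
  have cardC : C.card = NF.card := Finset.card_image_of_injective _ (add_right_injective v)
  have coset_out : ∀ w : H, ¬ InS1 f ((0 : G), w) → Disjoint NF (NF.image (fun n => w + n)) := by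
    intro w hw
    rw [Finset.disjoint_left]
    intro b hbA hbB
    obtain ⟨n, hn, hbn⟩ := Finset.mem_image.mp hbB
    apply hw
    have : w = b - n := by rw [← hbn]; abel
    rw [this, ← memNF]
    exact sub_closed b n hbA hn
  have dAB : Disjoint NF B := coset_out u hu
  have dAC : Disjoint NF C := coset_out v hv
  have dBC : Disjoint B C := by
    rw [Finset.disjoint_left]
    intro b hbB hbC
    obtain ⟨n, hn, hbn⟩ := Finset.mem_image.mp hbB
    obtain ⟨n', hn', hbn'⟩ := Finset.mem_image.mp hbC
    apply huv
    have h4 : u + n = v + n' := hbn.trans hbn'.symm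
    have h5 : u - v = n' - n := sub_eq_sub_iff_add_eq_add.mpr (by rw [h4]; abel)
    rw [h5, ← memNF]
    exact sub_closed n' n hn' hn
  -- cardinality contradiction
  have hABC : (NF ∪ B ∪ C).card = 3 * NF.card := by
    rw [Finset.union_assoc,
      Finset.card_union_of_disjoint (Finset.disjoint_union_right.mpr ⟨dAB, dAC⟩)]
    rw [Finset.card_union_of_disjoint dBC, cardB, cardC]
    ring
  have hG2 : Fintype.card G ≤ 2 * NF.card := by
    calc Fintype.card G = 2 * D.card := hcardD
    _ ≤ 2 * NF.card := by omega
  have hpos : 1 ≤ NF.card := Finset.card_pos.mpr ⟨0, zero_mem⟩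
  have final : 3 * NF.card ≤ 2 * NF.card := by
    calc 3 * NF.card = (NF ∪ B ∪ C).card := hABC.symm
    _ ≤ Fintype.card H := Finset.card_le_univ _
    _ = Fintype.card G := hcard.symm
    _ ≤ 2 * NF.card := hG2
  omega

end Aux

/-- If `k > 2`, the incidence graph of `S(G,H;f)` is not connected, and
`P_a^i ∩ P_c^i ≠ ∅` for `i = 1` or `i = 2`, then `P_{a-c}^1 = P_{c-a}^1 = P_0^1`. -/
theorem Pac_eq_P0 {G H : Type*} [AddCommGroup G] [AddCommGroup H]
    [Fintype G] [Fintype H]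
    (hcard : Fintype.card G = Fintype.card H) (heven : Even (Fintype.card G))
    (f : G → H) (hf : IsSemiPlanar f)
    (hk : 2 < Fintype.card G) (hnc : ¬ (incGraph f).Connected) (a c : G)
    (hint : ({b : H | InS1 f (a, b)} ∩ {b : H | InS1 f (c, b)}).Nonempty ∨
            ({b : H | ¬ InS1 f (a, b)} ∩ {b : H | ¬ InS1 f (c, b)}).Nonempty) :
    {b : H | InS1 f (a - c, b)} = {b : H | InS1 f ((0 : G), b)} ∧
    {b : H | InS1 f (c - a, b)} = {b : H | InS1 f ((0 : G), b)} := by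
  -- first, establish the key fact `InS1 f (a - c, 0)`
  have key : InS1 f (a - c, (0 : H)) := by
    rcases hint with ⟨b, hb1, hb2⟩ | ⟨b, hb1, hb2⟩
    · have := InS1_sub f hb1 hb2
      simpa using this
    · simp only [Set.mem_setOf_eq] at hb1 hb2
      have hb₁ : InS1 f (a, f (0 + a) - f 0) := InS1_basic f a 0
      have hb₂ : InS1 f (c, f (0 + c) - f 0) := InS1_basic f c 0
      set b₁ : H := f (0 + a) - f 0
      set b₂ : H := f (0 + c) - f 0
      have hu : ¬ InS1 f ((0 : G), b - b₁) := by
        intro h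
        apply hb1
        have := InS1_add f h hb₁
        simpa using this
      have hv : ¬ InS1 f ((0 : G), b - b₂) := by
        intro h
        apply hb2
        have := InS1_add f h hb₂
        simpa using this
      have key2 : InS1 f ((0 : G), (b - b₁) - (b - b₂)) := index_two f hcard hf hk hu hv
      have key3 : InS1 f ((0 : G), b₂ - b₁) := by
        have : (b - b₁) - (b - b₂) = b₂ - b₁ := by abel
        rwa [this] at key2
      have hc1 : InS1 f (c, b₁) := by
        have := InS1_sub f hb₂ key3
        simpa using this
      have := InS1_sub f hb₁ hc1
      simpa using this
  have keyneg : InS1 f (c - a, (0 : H)) := by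
    have := InS1_sub f (InS1_zero f) key
    simpa using this
  constructor
  · ext b
    simp only [Set.mem_setOf_eq]
    constructor
    · intro h
      have := InS1_sub f h key
      simpa using this
    · intro h
      have := InS1_add f h key
      simpa using this
  · ext b
    simp only [Set.mem_setOf_eq]
    constructor
    · intro h
      have := InS1_sub f h keyneg
      simpa using this
    · intro h
      have := InS1_add f h keyneg
      simpa using this
end
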